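/- arXiv:2208.03841 — 3 statements merged into one kernel-verified Lean document; each statement's English description precedes it below -/
import Mathlib

section
/- Let G be a discrete group and X a Hausdorff topological space with a continuous topological partial action of G. Then the enveloping space X_G = (G × X)/R is T1. -/
open Set

structure PartialAction (G : Type*) (X : Type*) [Group G] where
  D : G → Set X
  act : G → X → X
  D_one : D 1 = Set.univ
  act_one : ∀ x, act 1 x = x
  bijOn : ∀ g : G, Set.BijOn (act g) (D g⁻¹) (D g)
  image_inter : ∀ g h : G, act g '' (D g⁻¹ ∩ D h) = D g ∩ D (g * h)
  comp : ∀ g h : G, ∀ x ∈ D h⁻¹ ∩ D (h⁻¹ * g⁻¹), act g (act h x) = act (g * h) x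

/-- The domain `G*X = {(g,x) : x ∈ X_{g⁻¹}}` of a partial action. -/
def PartialAction.domSet {G X : Type*} [Group G] (pa : PartialAction G X) : Set (G × X) :=
  {p : G × X | p.2 ∈ pa.D p.1⁻¹}

/-- The relation `R` on `G × X`: `(g,x) R (h,y)` iff `x ∈ X_{g⁻¹h}` and `η_{h⁻¹g}(x) = y`. -/
def PartialAction.envRel {G X : Type*} [Group G] (pa : PartialAction G X) :
    G × X → G × X → Prop :=
  fun p q => p.2 ∈ pa.D (p.1⁻¹ * q.1) ∧ pa.act (q.1⁻¹ * p.1) p.2 = q.2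

/-- The orbit equivalence relation of a partial action. -/
def PartialAction.orbitRel {G X : Type*} [Group G] (pa : PartialAction G X) : X → X → Prop :=
  fun x y => ∃ g : G, x ∈ pa.D g⁻¹ ∧ pa.act g x = y

/-- A topological partial action: open domains, each `η_g` a homeomorphism onto its image. -/
structure TopPartialAction (G : Type*) (X : Type*) [Group G] [TopologicalSpace G]
    [TopologicalSpace X] extends PartialAction G X where
  isOpen_D : ∀ g : G, IsOpen (D g)
  continuousOn_act : ∀ g : G, ContinuousOn (act g) (D g⁻¹)

/-- A continuous topological partial action: the evaluation map on `G*X` is continuous. -/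
structure ContPartialAction (G : Type*) (X : Type*) [Group G] [TopologicalSpace G]
    [TopologicalSpace X] extends TopPartialAction G X where
  continuousOn_eval :
    ContinuousOn (fun p : G × X => act p.1 p.2) {p : G × X | p.2 ∈ D p.1⁻¹}

namespace PartialAction

variable {G X : Type*} [Group G] (pa : PartialAction G X)

lemma envRel_symm {p q : G × X} (hpq : pa.envRel p q) : pa.envRel q p := by
  obtain ⟨g, x⟩ := p
  obtain ⟨h, y⟩ := q
  obtain ⟨hx, heq⟩ := hpq
  simp only [envRel] at *
  have hinv : (h⁻¹ * g)⁻¹ = g⁻¹ * h := by group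
  have hy : y ∈ pa.D (h⁻¹ * g) := by
    rw [← heq]
    exact (pa.bijOn (h⁻¹ * g)).mapsTo (by rwa [hinv])
  refine ⟨hy, ?_⟩
  rw [← heq]
  have := pa.comp (g⁻¹ * h) (h⁻¹ * g) x ⟨by rwa [hinv], by
    have : (h⁻¹ * g)⁻¹ * (g⁻¹ * h)⁻¹ = (1 : G) := by group
    rw [this, pa.D_one]; trivial⟩
  have h1 : (g⁻¹ * h) * (h⁻¹ * g) = (1 : G) := by group
  rw [this, h1, pa.act_one]

lemma envRel_refl (p : G × X) : pa.envRel p p := by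
  refine ⟨?_, ?_⟩ <;> simp [envRel, pa.D_one, pa.act_one]

lemma envRel_trans {p q r : G × X} (hpq : pa.envRel p q) (hqr : pa.envRel q r) :
    pa.envRel p r := by
  obtain ⟨g, x⟩ := p
  obtain ⟨h, y⟩ := q
  obtain ⟨k, z⟩ := r
  obtain ⟨hx, heq⟩ := hpq
  obtain ⟨hy, heq'⟩ := hqr
  obtain ⟨hy', heq''⟩ := pa.envRel_symm ⟨hx, heq⟩
  simp only [envRel] at *
  have hmem : x ∈ pa.D (g⁻¹ * h) ∩ pa.D (g⁻¹ * k) := by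
    have himg := pa.image_inter (g⁻¹ * h) (h⁻¹ * k)
    have h1 : (g⁻¹ * h)⁻¹ = h⁻¹ * g := by group
    have h2 : g⁻¹ * h * (h⁻¹ * k) = g⁻¹ * k := by group
    rw [h1, h2] at himg
    rw [← himg]
    exact ⟨y, ⟨hy', hy⟩, heq''⟩
  refine ⟨hmem.2, ?_⟩
  have hcomp := pa.comp (k⁻¹ * h) (h⁻¹ * g) x ⟨by
      have : (h⁻¹ * g)⁻¹ = g⁻¹ * h := by group
      rw [this]; exact hmem.1, by
      have : (h⁻¹ * g)⁻¹ * (k⁻¹ * h)⁻¹ = g⁻¹ * k := by group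
      rw [this]; exact hmem.2⟩
  have h3 : (k⁻¹ * h) * (h⁻¹ * g) = k⁻¹ * g := by group
  rw [h3] at hcomp
  rw [← hcomp, heq, heq']

lemma envRel_equivalence : Equivalence pa.envRel :=
  ⟨pa.envRel_refl, pa.envRel_symm, pa.envRel_trans⟩

end PartialAction

/-- For a discrete group acting partially on a Hausdorff space, the enveloping
space is T1. -/
theorem statement7 {G X : Type*} [Group G] [TopologicalSpace G] [DiscreteTopology G]
    [TopologicalSpace X] [T2Space X] (pa : ContPartialAction G X) :
    T1Space (Quot pa.envRel) := by
  set r := pa.envRel with hr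
  have hequiv : Equivalence r := pa.toPartialAction.envRel_equivalence
  constructor
  intro q
  induction q using Quot.ind with
  | _ p =>
    obtain ⟨h, y⟩ := p
    rw [← isQuotientMap_quot_mk.isClosed_preimage, ← isOpen_compl_iff]
    rw [isOpen_iff_forall_mem_open]
    rintro ⟨g, x⟩ hgx
    simp only [mem_compl_iff, mem_preimage, mem_singleton_iff] at hgx
    have hnrel : ¬ r (g, x) (h, y) := fun hrel => hgx (Quot.sound hrel)
    by_cases hy : y ∈ pa.D (h⁻¹ * g)
    · refine ⟨{g} ×ˢ {pa.act (g⁻¹ * h) y}ᶜ, ?_, ?_, ?_⟩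
      · rintro ⟨g', x'⟩ ⟨hg', hx'⟩
        simp only [mem_singleton_iff] at hg'
        subst hg'
        simp only [mem_compl_iff, mem_preimage, mem_singleton_iff]
        intro habs
        have hrel : r (g', x') (h, y) :=
          hequiv.eqvGen_iff.mp (Quot.eq.mp habs)
        obtain ⟨_, heq⟩ := pa.toPartialAction.envRel_symm hrel
        exact hx' heq.symm
      · exact (isOpen_discrete _).prod isOpen_compl_singleton
      · refine ⟨rfl, ?_⟩
        simp only [mem_compl_iff, mem_singleton_iff]
        intro habs
        exact hnrel (pa.toPartialAction.envRel_symm ⟨hy, habs.symm⟩)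
    · refine ⟨{g} ×ˢ univ, ?_, (isOpen_discrete _).prod isOpen_univ, ⟨rfl, trivial⟩⟩
      rintro ⟨g', x'⟩ ⟨hg', -⟩
      simp only [mem_singleton_iff] at hg'
      subst hg'
      simp only [mem_compl_iff, mem_preimage, mem_singleton_iff]
      intro habs
      have hrel : r (g', x') (h, y) :=
        hequiv.eqvGen_iff.mp (Quot.eq.mp habs)
      obtain ⟨hy', -⟩ := pa.toPartialAction.envRel_symm hrel
      exact hy hy'
end

section
/- Let G be a compact topological group and η : G*X → X a continuous topological partial action with G*X closed in G × X. If X is Hausdorff (respectively regular, respectively second countable, respectively metrizable), then the orbit space X/∼_G is Hausdorff (respectively regular, respectively second countable, respectively metrizable). -/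
open Set

namespace PartialAction

variable {G X : Type*} [Group G] (pa : PartialAction G X)

lemma mem_D_one (x : X) : x ∈ pa.D 1 := by rw [pa.D_one]; trivial

lemma act_mem {g : G} {x : X} (h : x ∈ pa.D g⁻¹) : pa.act g x ∈ pa.D g :=
  (pa.bijOn g).mapsTo h

lemma act_inv_act {g : G} {x : X} (h : x ∈ pa.D g⁻¹) :
    pa.act g⁻¹ (pa.act g x) = x := by
  have := pa.comp g⁻¹ g x ⟨h, by rw [inv_inv, inv_mul_cancel]; exact pa.mem_D_one x⟩
  rwa [inv_mul_cancel, pa.act_one] at this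

lemma orbit_equiv : Equivalence pa.orbitRel := by
  constructor
  · intro x
    exact ⟨1, by rw [inv_one]; exact pa.mem_D_one x, pa.act_one x⟩
  · rintro x y ⟨g, hx, rfl⟩
    exact ⟨g⁻¹, by rw [inv_inv]; exact pa.act_mem hx, pa.act_inv_act hx⟩
  · rintro x y z ⟨g, hx, rfl⟩ ⟨h, hy, rfl⟩
    have hmem : x ∈ pa.D (g⁻¹ * h⁻¹) := by
      have himg := pa.image_inter g⁻¹ h⁻¹
      rw [inv_inv] at himg
      have : pa.act g⁻¹ (pa.act g x) ∈ pa.D g⁻¹ ∩ pa.D (g⁻¹ * h⁻¹) := by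
        rw [← himg]
        exact Set.mem_image_of_mem _ ⟨pa.act_mem hx, hy⟩
      rw [pa.act_inv_act hx] at this
      exact this.2
    refine ⟨h * g, by rwa [mul_inv_rev], ?_⟩
    rw [← pa.comp h g x ⟨hx, hmem⟩]

lemma mk_eq_mk {x y : X} :
    Quot.mk pa.orbitRel x = Quot.mk pa.orbitRel y ↔ pa.orbitRel x y := by
  rw [Quot.eq, (pa.orbit_equiv).eqvGen_iff]

/-- The saturation of a set. -/
def sat (S : Set X) : Set X := {y | ∃ x ∈ S, pa.orbitRel x y}

lemma preimage_image_mk (S : Set X) :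
    Quot.mk pa.orbitRel ⁻¹' (Quot.mk pa.orbitRel '' S) = pa.sat S := by
  ext y
  simp only [mem_preimage, mem_image, sat, mem_setOf_eq]
  constructor
  · rintro ⟨x, hx, hxy⟩
    exact ⟨x, hx, (pa.mk_eq_mk).1 hxy⟩
  · rintro ⟨x, hx, hxy⟩
    exact ⟨x, hx, (pa.mk_eq_mk).2 hxy⟩

lemma sat_eq_iUnion (S : Set X) :
    pa.sat S = ⋃ g : G, pa.act g '' (S ∩ pa.D g⁻¹) := by
  ext y
  simp only [sat, mem_setOf_eq, mem_iUnion, mem_image, mem_inter_iff]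
  constructor
  · rintro ⟨x, hxS, g, hg, rfl⟩
    exact ⟨g, x, ⟨hxS, hg⟩, rfl⟩
  · rintro ⟨g, x, ⟨hxS, hg⟩, rfl⟩
    exact ⟨x, hxS, g, hg, rfl⟩

lemma sat_eq_proj (S : Set X) :
    pa.sat S = Prod.snd '' (pa.domSet ∩ {p : G × X | pa.act p.1 p.2 ∈ S}) := by
  ext y
  simp only [sat, mem_setOf_eq, mem_image, mem_inter_iff, domSet, Prod.exists]
  constructor
  · rintro ⟨x, hxS, g, hg, rfl⟩
    refine ⟨g⁻¹, pa.act g x, ⟨?_, ?_⟩, rfl⟩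
    · rw [inv_inv]; exact pa.act_mem hg
    · rwa [pa.act_inv_act hg]
  · rintro ⟨g, y', ⟨hdom, hact⟩, rfl⟩
    exact ⟨pa.act g y', hact,
      ((pa.orbit_equiv).symm ⟨g, hdom, rfl⟩ : pa.orbitRel (pa.act g y') y')⟩

end PartialAction

namespace TopPartialAction

variable {G X : Type*} [Group G] [TopologicalSpace G] [TopologicalSpace X]
  (pa : TopPartialAction G X)

lemma isOpen_image_act (g : G) {V : Set X} (hV : IsOpen V) (hVD : V ⊆ pa.D g⁻¹) :
    IsOpen (pa.act g '' V) := by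
  have himg : pa.act g '' V = pa.D g ∩ pa.act g⁻¹ ⁻¹' V := by
    ext y
    constructor
    · rintro ⟨x, hx, rfl⟩
      refine ⟨pa.act_mem (hVD hx), ?_⟩
      simpa [pa.act_inv_act (hVD hx)] using hx
    · rintro ⟨hy, hy'⟩
      refine ⟨pa.act g⁻¹ y, hy', ?_⟩
      have : y ∈ pa.D g⁻¹⁻¹ := by rwa [inv_inv]
      have := pa.act_inv_act (g := g⁻¹) this
      rwa [inv_inv] at this
  rw [himg]
  have hc : ContinuousOn (pa.act g⁻¹) (pa.D g) := by
    have := pa.continuousOn_act g⁻¹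
    rwa [inv_inv] at this
  exact hc.isOpen_inter_preimage (pa.isOpen_D g) hV

lemma isOpen_sat {S : Set X} (hS : IsOpen S) : IsOpen (pa.sat S) := by
  rw [PartialAction.sat_eq_iUnion]
  exact isOpen_iUnion fun g =>
    pa.isOpen_image_act g (hS.inter (pa.isOpen_D g⁻¹)) inter_subset_right

lemma isOpenMap_mk : IsOpenMap (Quot.mk pa.orbitRel) := by
  intro U hU
  rw [← isQuotientMap_quot_mk.isOpen_preimage, pa.preimage_image_mk]
  exact pa.isOpen_sat hU

end TopPartialAction

namespace ContPartialAction

variable {G X : Type*} [Group G] [TopologicalSpace G] [TopologicalSpace X]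
  [CompactSpace G] (pa : ContPartialAction G X) (hclosed : IsClosed pa.domSet)

set_option linter.unusedSectionVars false

include hclosed in
lemma isClosed_sat {S : Set X} (hS : IsClosed S) : IsClosed (pa.sat S) := by
  rw [PartialAction.sat_eq_proj]
  apply isClosedMap_snd_of_compactSpace
  exact pa.continuousOn_eval.preimage_isClosed_of_isClosed hclosed hS

include hclosed in
lemma isClosedMap_mk : IsClosedMap (Quot.mk pa.orbitRel) := by
  intro C hC
  rw [← isQuotientMap_quot_mk.isClosed_preimage, pa.preimage_image_mk]
  exact pa.isClosed_sat hclosed hC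

/-- The orbit of a point. -/
def orb (x : X) : Set X := {y | pa.orbitRel x y}

lemma mem_orb_self (x : X) : x ∈ pa.orb x := (pa.orbit_equiv).refl x

lemma orb_eq_image (x : X) :
    pa.orb x = (fun g => pa.act g x) '' {g : G | x ∈ pa.D g⁻¹} := by
  ext y
  simp only [orb, PartialAction.orbitRel, mem_setOf_eq, mem_image]

include hclosed in
lemma isCompact_orb (x : X) : IsCompact (pa.orb x) := by
  rw [pa.orb_eq_image]
  have hcl : IsClosed {g : G | x ∈ pa.D g⁻¹} := by
    have : {g : G | x ∈ pa.D g⁻¹} = (fun g => (g, x)) ⁻¹' pa.domSet := rfl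
    rw [this]
    exact hclosed.preimage (Continuous.prodMk_left x)
  have hcomp : IsCompact {g : G | x ∈ pa.D g⁻¹} := hcl.isCompact
  apply hcomp.image_of_continuousOn
  have : (fun g : G => pa.act g x) = (fun p : G × X => pa.act p.1 p.2) ∘ fun g => (g, x) :=
    rfl
  rw [this]
  exact pa.continuousOn_eval.comp (Continuous.prodMk_left x).continuousOn
    (fun g hg => hg)

lemma sat_eq_union_orb (S : Set X) : pa.sat S = ⋃ x ∈ S, pa.orb x := by
  ext y
  simp [PartialAction.sat, orb]

lemma orb_eq_of_rel {x y : X} (h : pa.orbitRel x y) : pa.orb x = pa.orb y := by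
  ext z
  exact ⟨fun hz => (pa.orbit_equiv).trans ((pa.orbit_equiv).symm h) hz,
    fun hz => (pa.orbit_equiv).trans h hz⟩
lemma isOpenQuotientMap_mk : IsOpenQuotientMap (Quot.mk pa.orbitRel) :=
  ⟨Quot.mk_surjective, continuous_quot_mk, pa.isOpenMap_mk⟩

include hclosed in
lemma isClosed_rel [T2Space X] : IsClosed {p : X × X | pa.orbitRel p.1 p.2} := by
  have key : {p : X × X | pa.orbitRel p.1 p.2} =
      Prod.snd '' ({q : G × X × X | (q.1, q.2.1) ∈ pa.domSet} ∩
        (fun q : G × X × X => (pa.act q.1 q.2.1, q.2.2)) ⁻¹' Set.diagonal X) := by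
    ext ⟨x, y⟩
    simp only [mem_setOf_eq, mem_image, mem_inter_iff, mem_preimage, Set.mem_diagonal_iff,
      PartialAction.orbitRel, PartialAction.domSet, Prod.exists]
    constructor
    · rintro ⟨g, hg, rfl⟩
      exact ⟨g, x, pa.act g x, ⟨hg, rfl⟩, rfl⟩
    · rintro ⟨g, x', y', ⟨hg, hact⟩, heq⟩
      obtain ⟨rfl, rfl⟩ := Prod.mk.injEq .. ▸ heq
      exact ⟨g, hg, hact⟩
  rw [key]
  apply isClosedMap_snd_of_compactSpace
  have hA : IsClosed {q : G × X × X | (q.1, q.2.1) ∈ pa.domSet} :=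
    hclosed.preimage (by fun_prop)
  have hcont : ContinuousOn (fun q : G × X × X => (pa.act q.1 q.2.1, q.2.2))
      {q : G × X × X | (q.1, q.2.1) ∈ pa.domSet} := by
    apply ContinuousOn.prodMk
    · exact pa.continuousOn_eval.comp (by fun_prop : Continuous
        fun q : G × X × X => (q.1, q.2.1)).continuousOn (fun q hq => hq)
    · exact (by fun_prop : Continuous fun q : G × X × X => q.2.2).continuousOn
  exact hcont.preimage_isClosed_of_isClosed hA isClosed_diagonal

include hclosed in
lemma t2_quot [T2Space X] : T2Space (Quot pa.orbitRel) := by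
  rw [t2_iff_isClosed_diagonal]
  rw [← ((pa.isOpenQuotientMap_mk.prodMap pa.isOpenQuotientMap_mk).isQuotientMap).isClosed_preimage]
  have : Prod.map (Quot.mk pa.orbitRel) (Quot.mk pa.orbitRel) ⁻¹' Set.diagonal _ =
      {p : X × X | pa.orbitRel p.1 p.2} := by
    ext ⟨x, y⟩
    simp only [mem_preimage, Prod.map_apply, Set.mem_diagonal_iff, mem_setOf_eq,
      pa.mk_eq_mk]
  rw [this]
  exact pa.isClosed_rel hclosed

include hclosed in
lemma regular_quot [RegularSpace X] : RegularSpace (Quot pa.orbitRel) := by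
  apply RegularSpace.of_exists_mem_nhds_isClosed_subset
  intro q s hs
  obtain ⟨x, rfl⟩ := Quot.exists_rep q
  set π := Quot.mk pa.orbitRel
  have hUopen : IsOpen (π ⁻¹' interior s) := (isOpen_interior).preimage continuous_quot_mk
  have horb : pa.orb x ⊆ π ⁻¹' interior s := by
    intro y hy
    have : π y = π x := (pa.mk_eq_mk.2 ((pa.orbit_equiv).symm hy))
    rw [mem_preimage, this]
    exact mem_interior_iff_mem_nhds.2 hs
  obtain ⟨V, hVopen, hKV, hVcl⟩ := (pa.isCompact_orb hclosed x).exists_isOpen_closure_subset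
    (hUopen.mem_nhdsSet.2 horb)
  refine ⟨π '' closure V, ?_, pa.isClosedMap_mk hclosed _ isClosed_closure, ?_⟩
  · exact Filter.mem_of_superset ((pa.isOpenMap_mk _ hVopen).mem_nhds
      ⟨x, hKV (pa.mem_orb_self x), rfl⟩) (image_mono subset_closure)
  · intro z hz
    obtain ⟨y, hy, rfl⟩ := hz
    have := hVcl hy
    rw [mem_preimage] at this
    exact interior_subset this

lemma secondCountable_quot [SecondCountableTopology X] :
    SecondCountableTopology (Quot pa.orbitRel) :=
  isQuotientMap_quot_mk.secondCountableTopology pa.isOpenMap_mk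

end ContPartialAction

namespace ContPartialAction

open TopologicalSpace EMetric Metric ENNReal

variable {G X : Type*} [Group G] [TopologicalSpace G] [TopologicalSpace X]
  [CompactSpace G] (pa : ContPartialAction G X) (hclosed : IsClosed pa.domSet)

set_option linter.unusedSectionVars false

include hclosed in
lemma metrizable_quot [TopologicalSpace.MetrizableSpace X] :
    TopologicalSpace.MetrizableSpace (Quot pa.orbitRel) := by
  letI : MetricSpace X := TopologicalSpace.metrizableSpaceMetric X
  -- the orbit map into nonempty compact subsets
  set orbNC : X → NonemptyCompacts X := fun x =>
    ⟨⟨pa.orb x, pa.isCompact_orb hclosed x⟩, ⟨x, pa.mem_orb_self x⟩⟩ with horbNC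
  have hedist : ∀ x y : X, edist (orbNC x) (orbNC y) = hausdorffEdist (pa.orb x) (pa.orb y) :=
    fun x y => rfl
  -- continuity of the orbit map
  have hcont : Continuous orbNC := by
    rw [continuous_iff_continuousAt]
    intro x
    rw [ContinuousAt, EMetric.tendsto_nhds]
    intro ε hε
    set r : ℝ≥0∞ := min (ε / 2) 1 with hrdef
    have hr0 : 0 < r := lt_min (ENNReal.half_pos hε.ne') zero_lt_one
    have hrε : r < ε := by
      rcases eq_or_ne ε ⊤ with h | h
      · exact (min_le_right _ _).trans_lt (by simp [h])
      · exact (min_le_left _ _).trans_lt (ENNReal.half_lt_self hε.ne' h)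
    -- upper semicontinuity neighborhood
    set W : Set X := ⋃ w ∈ pa.orb x, Metric.eball w r with hWdef
    have hWopen : IsOpen W := isOpen_biUnion fun _ _ => EMetric.isOpen_ball
    set V₁ : Set X := (pa.sat Wᶜ)ᶜ with hV₁def
    have hV₁open : IsOpen V₁ := (pa.isClosed_sat hclosed hWopen.isClosed_compl).isOpen_compl
    have hxV₁ : x ∈ V₁ := by
      intro hx
      obtain ⟨c, hcC, hcx⟩ := hx
      have : c ∈ W := mem_biUnion ((pa.orbit_equiv).symm hcx) (EMetric.mem_ball_self hr0)
      exact hcC this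
    have hupper : ∀ y ∈ V₁, ∀ z ∈ pa.orb y, ∃ w ∈ pa.orb x, edist z w ≤ r := by
      intro y hy z hz
      have hzW : z ∈ W := by
        by_contra hzW
        exact hy ⟨z, hzW, (pa.orbit_equiv).symm hz⟩
      obtain ⟨w, hw, hzw⟩ := mem_iUnion₂.1 hzW
      exact ⟨w, hw, le_of_lt hzw⟩
    -- lower semicontinuity neighborhood
    have hcover : pa.orb x ⊆ ⋃ a ∈ pa.orb x, Metric.eball a (r / 2) := fun a ha =>
      mem_biUnion ha (EMetric.mem_ball_self (ENNReal.half_pos hr0.ne'))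
    obtain ⟨F, hFsub, hFfin, hFcover⟩ :=
      (pa.isCompact_orb hclosed x).elim_finite_subcover_image
        (fun a _ => EMetric.isOpen_ball) hcover
    set V₂ : Set X := ⋂ a ∈ F, pa.sat (Metric.eball a (r / 2)) with hV₂def
    have hV₂open : IsOpen V₂ :=
      hFfin.isOpen_biInter fun a _ => pa.isOpen_sat EMetric.isOpen_ball
    have hxV₂ : x ∈ V₂ := by
      refine mem_iInter₂.2 fun a haF => ?_
      exact ⟨a, EMetric.mem_ball_self (ENNReal.half_pos hr0.ne'),
        (pa.orbit_equiv).symm (hFsub haF)⟩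
    have hlower : ∀ y ∈ V₂, ∀ w ∈ pa.orb x, ∃ c ∈ pa.orb y, edist w c ≤ r := by
      intro y hy w hw
      obtain ⟨a, haF, hwa⟩ := mem_iUnion₂.1 (hFcover hw)
      obtain ⟨c, hca, hcy⟩ := mem_iInter₂.1 hy a haF
      refine ⟨c, (pa.orbit_equiv).symm hcy, ?_⟩
      calc edist w c ≤ edist w a + edist a c := edist_triangle _ _ _
        _ ≤ r / 2 + r / 2 := add_le_add (le_of_lt hwa)
            (le_of_lt (by rw [EMetric.mem_ball'] at hca; exact hca))
        _ = r := ENNReal.add_halves r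
    -- combine
    filter_upwards [(hV₁open.inter hV₂open).mem_nhds ⟨hxV₁, hxV₂⟩] with y hy
    rw [hedist]
    calc hausdorffEdist (pa.orb y) (pa.orb x)
        ≤ r := hausdorffEdist_le_of_mem_edist (hupper y hy.1) (hlower y hy.2)
      _ < ε := hrε
  -- the induced map on the quotient
  have hwd : ∀ a b : X, pa.orbitRel a b → orbNC a = orbNC b := by
    intro a b hab
    ext z
    show z ∈ pa.orb a ↔ z ∈ pa.orb b
    rw [pa.orb_eq_of_rel hab]
  set φ : Quot pa.orbitRel → NonemptyCompacts X := Quot.lift orbNC hwd with hφdef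
  have hφcont : Continuous φ := (pa.isOpenQuotientMap_mk).continuous_comp_iff.1 hcont
  have hφinj : Function.Injective φ := by
    intro q₁ q₂ h
    obtain ⟨a, rfl⟩ := Quot.exists_rep q₁
    obtain ⟨b, rfl⟩ := Quot.exists_rep q₂
    have h' : orbNC a = orbNC b := h
    have horb : pa.orb a = pa.orb b := congrArg (fun s : NonemptyCompacts X => (s : Set X)) h'
    refine Quot.sound ?_
    show b ∈ pa.orb a
    rw [horb]
    exact pa.mem_orb_self b
  -- inducing
  have hind : (inferInstance : TopologicalSpace (Quot pa.orbitRel)) =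
      TopologicalSpace.induced φ inferInstance := by
    refine le_antisymm (continuous_iff_le_induced.mp hφcont) ?_
    intro U hU
    rw [isOpen_induced_iff]
    set P : Set X := Quot.mk pa.orbitRel ⁻¹' U with hPdef
    have hPopen : IsOpen P := hU.preimage continuous_quot_mk
    have hch : ∀ x ∈ P, ∃ ε > 0, ∀ y : X,
        hausdorffEdist (pa.orb y) (pa.orb x) < ε → Quot.mk pa.orbitRel y ∈ U := by
      intro x hx
      obtain ⟨ε, hε0, hball⟩ := EMetric.isOpen_iff.1 hPopen x hx
      refine ⟨ε, hε0, fun y hy => ?_⟩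
      have h1 : infEdist x (pa.orb y) < ε := by
        calc infEdist x (pa.orb y)
            ≤ hausdorffEdist (pa.orb x) (pa.orb y) :=
              infEdist_le_hausdorffEdist_of_mem (pa.mem_orb_self x)
          _ < ε := (hausdorffEDist_comm).trans_lt hy
      obtain ⟨z, hz, hxz⟩ := infEdist_lt_iff.1 h1
      have hzP : z ∈ P := hball (by rwa [EMetric.mem_ball, edist_comm])
      have : Quot.mk pa.orbitRel y = Quot.mk pa.orbitRel z := Quot.sound hz
      rwa [this]
    choose! ε hε0 hεball using hch
    refine ⟨⋃ x ∈ P, Metric.eball (orbNC x) (ε x), isOpen_biUnion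
      fun _ _ => EMetric.isOpen_ball, ?_⟩
    ext q
    obtain ⟨y, rfl⟩ := Quot.exists_rep q
    simp only [mem_preimage, mem_iUnion₂, EMetric.mem_ball]
    constructor
    · rintro ⟨x, hxP, hlt⟩
      have hlt' : edist (orbNC y) (orbNC x) < ε x := by
        rw [hφdef] at hlt; exact hlt
      exact hεball x hxP y (by rwa [hedist] at hlt')
    · intro hyU
      exact ⟨y, hyU, by rw [edist_self]; exact hε0 y hyU⟩
  have hemb : Topology.IsEmbedding φ := ⟨⟨hind⟩, hφinj⟩
  exact hemb.metrizableSpace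

end ContPartialAction

/-- If `G` is compact and `G*X` closed, the orbit space inherits Hausdorffness,
regularity, second countability and metrizability from `X`. -/
theorem statement13 {G X : Type*} [Group G] [TopologicalSpace G] [TopologicalSpace X]
    [CompactSpace G] (pa : ContPartialAction G X)
    (hclosed : IsClosed pa.domSet) :
    (T2Space X → T2Space (Quot pa.orbitRel)) ∧
    (RegularSpace X → RegularSpace (Quot pa.orbitRel)) ∧
    (SecondCountableTopology X → SecondCountableTopology (Quot pa.orbitRel)) ∧
    (TopologicalSpace.MetrizableSpace X →
      TopologicalSpace.MetrizableSpace (Quot pa.orbitRel)) := by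
  refine ⟨?_, ?_, ?_, ?_⟩
  · intro h; haveI := h; exact pa.t2_quot hclosed
  · intro h; haveI := h; exact pa.regular_quot hclosed
  · intro h; haveI := h; exact pa.secondCountable_quot
  · intro h; haveI := h; exact pa.metrizable_quot hclosed
end

section
/- Let G be a compact topological group, X a compact Hausdorff space, and η : G*X → X a continuous topological partial action. If the enveloping space X_G is Hausdorff, then G*X is closed in G × X. -/
open Set

private lemma envRel_symm' {G X : Type*} [Group G] (pa : PartialAction G X)
    {p q : G × X} (h : pa.envRel p q) : pa.envRel q p := by
  obtain ⟨g, x⟩ := p; obtain ⟨h', y⟩ := q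
  obtain ⟨hx, hy⟩ := h
  dsimp only at hx hy ⊢
  have hx' : x ∈ pa.D (h'⁻¹ * g)⁻¹ := by simpa [mul_inv_rev] using hx
  constructor
  · have := (pa.bijOn (h'⁻¹ * g)).mapsTo hx'
    rw [hy] at this
    exact this
  · subst hy
    have hcomp := pa.comp (g⁻¹ * h') (h'⁻¹ * g) x
      ⟨hx', by simp [mul_inv_rev, pa.D_one, mul_assoc]⟩
    rw [show (g⁻¹ * h') * (h'⁻¹ * g) = 1 by group] at hcomp
    show pa.act (g⁻¹ * h') (pa.act (h'⁻¹ * g) x) = x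
    rw [hcomp, pa.act_one]

private lemma envRel_equiv' {G X : Type*} [Group G] (pa : PartialAction G X) :
    Equivalence pa.envRel := by
  constructor
  · rintro ⟨g, x⟩
    exact ⟨by simp [PartialAction.envRel, pa.D_one],
      by simp [PartialAction.envRel, pa.act_one]⟩
  · exact fun h => envRel_symm' pa h
  · rintro ⟨g, x⟩ ⟨h, y⟩ ⟨k, z⟩ h1 ⟨hy, hyz⟩
    obtain ⟨hy', hyx⟩ := envRel_symm' pa h1
    obtain ⟨hx, hxy⟩ := h1
    have hxmem : x ∈ pa.D (g⁻¹ * h) ∩ pa.D ((g⁻¹ * h) * (h⁻¹ * k)) := by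
      rw [← pa.image_inter (g⁻¹ * h) (h⁻¹ * k)]
      exact ⟨y, ⟨by simpa [mul_inv_rev] using hy', hy⟩, hyx⟩
    rw [show (g⁻¹ * h) * (h⁻¹ * k) = g⁻¹ * k by group] at hxmem
    refine ⟨hxmem.2, ?_⟩
    have hcomp := pa.comp (k⁻¹ * h) (h⁻¹ * g) x
      ⟨by simpa [mul_inv_rev] using hx, by simpa [mul_inv_rev, mul_assoc] using hxmem.2⟩
    rw [show (k⁻¹ * h) * (h⁻¹ * g) = k⁻¹ * g by group] at hcomp
    rw [← hcomp, hxy, hyz]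

/-- If `G` is compact, `X` is compact Hausdorff and the enveloping space `X_G`
is Hausdorff, then `G*X` is closed in `G × X`. -/
theorem statement14 {G X : Type*} [Group G] [TopologicalSpace G] [TopologicalSpace X]
    [CompactSpace G] [CompactSpace X] [T2Space X]
    (pa : ContPartialAction G X)
    (hT2 : T2Space (Quot pa.envRel)) :
    IsClosed pa.domSet := by
  have equiv : Equivalence pa.envRel := envRel_equiv' pa.toPartialAction
  set π : G × X → Quot pa.envRel := Quot.mk _ with hπ
  have hcont : Continuous π := continuous_quot_mk
  have hK : IsCompact (Set.range fun y : X => π (1, y)) :=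
    isCompact_range (hcont.comp (Continuous.prodMk_right 1))
  have hset : pa.domSet = π ⁻¹' (Set.range fun y : X => π (1, y)) := by
    ext ⟨g, x⟩
    simp only [Set.mem_preimage, Set.mem_range]
    constructor
    · intro h
      exact ⟨pa.act g x,
        (Quot.sound ⟨by simpa [PartialAction.domSet] using h, by simp⟩).symm⟩
    · rintro ⟨y, hy⟩
      have h := Quot.eq.mp hy.symm
      rw [equiv.eqvGen_iff] at h
      simpa [PartialAction.domSet] using h.1
  rw [hset]
  exact (hK.isClosed).preimage hcont
end
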